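/- arXiv:1904.01183 — 3 statements merged into one kernel-verified Lean document; each statement's English description precedes it below -/
import Mathlib

section
/- The von Neumann entropy S(ρ) = −Tr(ρ log ρ) is strictly concave on density matrices: for ρ₁ ≠ ρ₂ and 0 < λ < 1, S(λρ₁+(1−λ)ρ₂) > λS(ρ₁)+(1−λ)S(ρ₂). -/
open Matrix Kronecker ComplexOrder BigOperators Finset

noncomputable section

def IsDensity {d : Type*} [Fintype d] (ρ : Matrix d d ℂ) : Prop :=
  ρ.PosSemidef ∧ ρ.trace = 1

/-- Von Neumann entropy `S(ρ) = -Tr(ρ log ρ)`, computed via the eigenvalues of a Hermitian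
matrix (functional calculus), with the convention `0 log 0 = 0`. -/
def vnEntropy {d : ℕ} (ρ : Matrix (Fin d) (Fin d) ℂ) : ℝ :=
  if h : ρ.IsHermitian then -∑ i, h.eigenvalues i * Real.log (h.eigenvalues i) else 0

lemma vnEntropy_eq {d : ℕ} {A : Matrix (Fin d) (Fin d) ℂ} (hAH : A.IsHermitian) :
    vnEntropy A = ∑ i, Real.negMulLog (hAH.eigenvalues i) := by
  rw [vnEntropy, dif_pos hAH]
  simp [Real.negMulLog, neg_mul, ← Finset.sum_neg_distrib]

lemma schur_entropy {d : ℕ} {A : Matrix (Fin d) (Fin d) ℂ}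
    (hA : A.PosSemidef) (U : Matrix.unitaryGroup (Fin d) ℂ) :
    (∑ j, Real.negMulLog (hA.1.eigenvalues j)
      ≤ ∑ k, Real.negMulLog (((star (U : Matrix (Fin d) (Fin d) ℂ) * A * U) k k).re)) ∧
    ((∃ k l, k ≠ l ∧ (star (U : Matrix (Fin d) (Fin d) ℂ) * A * U) k l ≠ 0) →
      ∑ j, Real.negMulLog (hA.1.eigenvalues j)
        < ∑ k, Real.negMulLog (((star (U : Matrix (Fin d) (Fin d) ℂ) * A * U) k k).re)) := by
  set μ : Fin d → ℝ := hA.1.eigenvalues with hμ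
  set V : Matrix.unitaryGroup (Fin d) ℂ := hA.1.eigenvectorUnitary with hV
  set Mu : Matrix.unitaryGroup (Fin d) ℂ := star U * V with hMu
  set M : Matrix (Fin d) (Fin d) ℂ := (Mu : Matrix (Fin d) (Fin d) ℂ) with hM
  set B : Matrix (Fin d) (Fin d) ℂ := star (U : Matrix (Fin d) (Fin d) ℂ) * A * U with hB
  have hMstar : M * star M = 1 := Matrix.mem_unitaryGroup_iff.mp Mu.2
  have hstarM : star M * M = 1 := Matrix.mem_unitaryGroup_iff'.mp Mu.2
  have hBeq : B = M * Matrix.diagonal (Complex.ofReal ∘ μ) * star M := by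
    rw [hB, hM, hMu]
    push_cast
    rw [hA.1.spectral_theorem, Unitary.conjStarAlgAut_apply]
    simp only [Matrix.star_mul, star_star, Matrix.mul_assoc]
    rfl
  have hBentry : ∀ k l, B k l = ∑ j, M k j * (μ j : ℂ) * star (M l j) := by
    intro k l
    rw [hBeq]
    simp [Matrix.mul_apply, Matrix.diagonal_apply, Matrix.conjTranspose_apply,
      ite_mul, mul_ite, Finset.sum_ite_eq, Finset.sum_ite_eq']
  set c : Fin d → Fin d → ℝ := fun k j => Complex.normSq (M k j) with hc
  have hcM : ∀ k j, (M k j) * star (M k j) = ((c k j : ℝ) : ℂ) := by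
    intro k j; simpa [hc] using Complex.mul_conj (M k j)
  have hrow : ∀ k, ∑ j, c k j = 1 := by
    intro k
    have h1 : ∑ j, M k j * star (M k j) = 1 := by
      have := congrFun (congrFun hMstar k) k
      simpa [Matrix.mul_apply, Matrix.conjTranspose_apply, Matrix.one_apply] using this
    have : ((∑ j, c k j : ℝ) : ℂ) = 1 := by
      push_cast
      rw [← h1]
      exact Finset.sum_congr rfl fun j _ => (hcM k j).symm
    exact_mod_cast this
  have hcol : ∀ j, ∑ k, c k j = 1 := by
    intro j
    have h1 : ∑ k, star (M k j) * M k j = 1 := by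
      have := congrFun (congrFun hstarM j) j
      simpa [Matrix.mul_apply, Matrix.conjTranspose_apply, Matrix.one_apply] using this
    have : ((∑ k, c k j : ℝ) : ℂ) = 1 := by
      push_cast
      rw [← h1]
      exact Finset.sum_congr rfl fun k _ => by rw [mul_comm]; exact (hcM k j).symm
    exact_mod_cast this
  set q : Fin d → ℝ := fun k => ∑ j, c k j * μ j with hq
  have hqB : ∀ k, (B k k).re = q k := by
    intro k
    have : B k k = ((q k : ℝ) : ℂ) := by
      rw [hBentry k k, hq]
      push_cast
      refine Finset.sum_congr rfl fun j _ => ?_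
      rw [mul_comm ((c k j : ℝ) : ℂ), mul_comm (M k j) ((μ j : ℝ) : ℂ), mul_assoc, hcM k j]
    rw [this, Complex.ofReal_re]
  have hμ0 : ∀ j, 0 ≤ μ j := fun j => hA.eigenvalues_nonneg j
  have hc0 : ∀ k j, 0 ≤ c k j := fun k j => Complex.normSq_nonneg _
  have hrowle : ∀ k, ∑ j, c k j * Real.negMulLog (μ j) ≤ Real.negMulLog (q k) := by
    intro k
    have := Real.concaveOn_negMulLog.le_map_sum (t := Finset.univ) (w := c k) (p := μ)
      (fun j _ => hc0 k j) (hrow k) (fun j _ => hμ0 j)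
    simpa [smul_eq_mul, hq] using this
  have hswap : ∑ k, ∑ j, c k j * Real.negMulLog (μ j) = ∑ j, Real.negMulLog (μ j) := by
    rw [Finset.sum_comm]
    refine Finset.sum_congr rfl fun j _ => ?_
    rw [← Finset.sum_mul, hcol j, one_mul]
  constructor
  · calc ∑ j, Real.negMulLog (μ j) = ∑ k, ∑ j, c k j * Real.negMulLog (μ j) := hswap.symm
      _ ≤ ∑ k, Real.negMulLog (q k) := Finset.sum_le_sum fun k _ => hrowle k
      _ = ∑ k, Real.negMulLog ((B k k).re) := by
          exact Finset.sum_congr rfl fun k _ => by rw [hqB k]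
  · rintro ⟨k, l, hkl, hBkl⟩
    have hMM0 : ∑ j, M k j * star (M l j) = 0 := by
      have := congrFun (congrFun hMstar k) l
      simpa [Matrix.mul_apply, Matrix.conjTranspose_apply, Matrix.one_apply, hkl] using this
    have hex : ∃ j, M k j ≠ 0 ∧ μ j ≠ q k := by
      by_contra h
      push_neg at h
      apply hBkl
      rw [hBentry k l]
      have : ∀ j, M k j * (μ j : ℂ) * star (M l j) = ((q k : ℝ) : ℂ) * (M k j * star (M l j)) := by
        intro j
        by_cases hj : M k j = 0
        · simp [hj]
        · rw [h j hj]; ring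
      rw [Finset.sum_congr rfl fun j _ => this j, ← Finset.mul_sum, hMM0, mul_zero]
    obtain ⟨j₀, hj₀, hμj₀⟩ := hex
    set s : Finset (Fin d) := Finset.univ.filter (fun j => c k j ≠ 0) with hs
    have hj₀s : j₀ ∈ s := by
      simp only [hs, Finset.mem_filter, Finset.mem_univ, true_and]
      simpa [hc, Complex.normSq_eq_zero] using hj₀
    have hczero : ∀ x, x ∉ s → c k x = 0 := by
      intro x hx
      by_contra h0
      exact hx (by simp [hs, h0])
    have hsum_c : ∑ j ∈ s, c k j = 1 := by
      rw [Finset.sum_subset (Finset.subset_univ s) (fun x _ hx => hczero x hx)]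
      exact hrow k
    have hsum_cμ : ∑ j ∈ s, c k j * μ j = q k := by
      rw [Finset.sum_subset (Finset.subset_univ s)
        (fun x _ hx => by rw [hczero x hx, zero_mul])]
    have hne2 : ∃ j₁ ∈ s, ∃ j₂ ∈ s, μ j₁ ≠ μ j₂ := by
      by_contra h
      push_neg at h
      apply hμj₀
      rw [← hsum_cμ]
      have : ∀ j ∈ s, c k j * μ j = c k j * μ j₀ := fun j hj => by rw [h j hj j₀ hj₀s]
      rw [Finset.sum_congr rfl this, ← Finset.sum_mul, hsum_c, one_mul]
    have hstrict : ∑ j, c k j * Real.negMulLog (μ j) < Real.negMulLog (q k) := by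
      have hlt := Real.strictConcaveOn_negMulLog.lt_map_sum (t := s) (w := c k) (p := μ)
        (fun j hj => lt_of_le_of_ne (hc0 k j) (Ne.symm (by simpa [hs, Finset.mem_filter] using hj)))
        hsum_c (fun j _ => hμ0 j) hne2
      have e1 : ∑ j ∈ s, c k j * Real.negMulLog (μ j) = ∑ j, c k j * Real.negMulLog (μ j) :=
        Finset.sum_subset (Finset.subset_univ s)
          (fun x _ hx => by rw [hczero x hx, zero_mul])
      have e2 : ∑ j ∈ s, c k j * μ j = q k := hsum_cμ
      simpa [smul_eq_mul, e1, e2] using hlt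
    calc ∑ j, Real.negMulLog (μ j) = ∑ k, ∑ j, c k j * Real.negMulLog (μ j) := hswap.symm
      _ < ∑ k, Real.negMulLog (q k) :=
          Finset.sum_lt_sum (fun k _ => hrowle k) ⟨k, Finset.mem_univ k, hstrict⟩
      _ = ∑ k, Real.negMulLog ((B k k).re) := by
          exact Finset.sum_congr rfl fun k _ => by rw [hqB k]

/-- The von Neumann entropy is strictly concave on density matrices. -/
theorem vnEntropy_strictConcave {d : ℕ} (ρ₁ ρ₂ : Matrix (Fin d) (Fin d) ℂ)
    (h1 : IsDensity ρ₁) (h2 : IsDensity ρ₂) (hne : ρ₁ ≠ ρ₂)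
    (t : ℝ) (ht0 : 0 < t) (ht1 : t < 1) :
    t * vnEntropy ρ₁ + (1 - t) * vnEntropy ρ₂ <
      vnEntropy ((t : ℂ) • ρ₁ + ((1 - t : ℝ) : ℂ) • ρ₂) := by
  obtain ⟨hP1, hT1⟩ := h1
  obtain ⟨hP2, hT2⟩ := h2
  have ht0' : (0:ℝ) ≤ t := ht0.le
  have ht1' : (0:ℝ) ≤ 1 - t := by linarith
  set ρ : Matrix (Fin d) (Fin d) ℂ := (t : ℂ) • ρ₁ + ((1 - t : ℝ) : ℂ) • ρ₂ with hρdef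
  have hPρ : ρ.PosSemidef := by
    refine Matrix.PosSemidef.of_dotProduct_mulVec_nonneg ?_ ?_
    · show ρᴴ = ρ
      rw [hρdef, conjTranspose_add, conjTranspose_smul, conjTranspose_smul, hP1.1.eq, hP2.1.eq]
      simp
    · intro x
      have e : dotProduct (star x) (ρ *ᵥ x)
          = (t : ℂ) * dotProduct (star x) (ρ₁ *ᵥ x)
            + ((1 - t : ℝ) : ℂ) * dotProduct (star x) (ρ₂ *ᵥ x) := by
        simp [hρdef, Matrix.add_mulVec, Matrix.smul_mulVec, dotProduct_add, smul_eq_mul]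
      rw [e]
      have c1 : (0:ℂ) ≤ (t : ℂ) := by exact_mod_cast Complex.zero_le_real.mpr ht0'
      have c2 : (0:ℂ) ≤ ((1 - t : ℝ) : ℂ) := by exact_mod_cast Complex.zero_le_real.mpr ht1'
      exact add_nonneg (mul_nonneg c1 (hP1.dotProduct_mulVec_nonneg x)) (mul_nonneg c2 (hP2.dotProduct_mulVec_nonneg x))
  set U : Matrix.unitaryGroup (Fin d) ℂ := hPρ.1.eigenvectorUnitary with hU
  set p : Fin d → ℝ := hPρ.1.eigenvalues with hp
  have hdiag : star (U : Matrix (Fin d) (Fin d) ℂ) * ρ * U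
      = Matrix.diagonal (Complex.ofReal ∘ p) := by
    simpa using hPρ.1.conjStarAlgAut_star_eigenvectorUnitary
  set B₁ : Matrix (Fin d) (Fin d) ℂ := star (U : Matrix (Fin d) (Fin d) ℂ) * ρ₁ * U with hB₁
  set B₂ : Matrix (Fin d) (Fin d) ℂ := star (U : Matrix (Fin d) (Fin d) ℂ) * ρ₂ * U with hB₂
  set q1 : Fin d → ℝ := fun k => (B₁ k k).re with hq1
  set q2 : Fin d → ℝ := fun k => (B₂ k k).re with hq2
  have hcomb : ∀ k, p k = t * q1 k + (1 - t) * q2 k := by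
    intro k
    have e1 : star (U : Matrix (Fin d) (Fin d) ℂ) * ρ * U
        = (t : ℂ) • B₁ + ((1 - t : ℝ) : ℂ) • B₂ := by
      rw [hρdef, hB₁, hB₂]
      rw [Matrix.mul_add, Matrix.add_mul]
      rw [Matrix.mul_smul, Matrix.smul_mul, Matrix.mul_smul, Matrix.smul_mul]
    have e2 : ((p k : ℝ) : ℂ) = (t : ℂ) * B₁ k k + ((1 - t : ℝ) : ℂ) * B₂ k k := by
      have := congrFun (congrFun (hdiag.symm.trans e1) k) k
      simpa [Matrix.diagonal_apply_eq, Matrix.add_apply, Matrix.smul_apply, smul_eq_mul] using this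
    have := congrArg Complex.re e2
    simpa [Complex.re_ofReal_mul] using this
  have hB1psd : B₁.PosSemidef := hP1.conjTranspose_mul_mul_same (U : Matrix (Fin d) (Fin d) ℂ)
  have hB2psd : B₂.PosSemidef := hP2.conjTranspose_mul_mul_same (U : Matrix (Fin d) (Fin d) ℂ)
  have hdiagnn : ∀ (C : Matrix (Fin d) (Fin d) ℂ), C.PosSemidef → ∀ k, 0 ≤ (C k k).re := by
    intro C hC k
    have := hC.dotProduct_mulVec_nonneg (Pi.single k 1)
    have e : dotProduct (star (Pi.single k 1)) (C *ᵥ Pi.single k 1) = C k k := by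
      simp [Matrix.mulVec_single, dotProduct, Pi.single_apply]
    rw [e] at this
    exact (Complex.le_def.mp this).1
  have hq1nn : ∀ k, 0 ≤ q1 k := fun k => hdiagnn B₁ hB1psd k
  have hq2nn : ∀ k, 0 ≤ q2 k := fun k => hdiagnn B₂ hB2psd k
  have hpt : ∀ k, t * Real.negMulLog (q1 k) + (1 - t) * Real.negMulLog (q2 k)
      ≤ Real.negMulLog (p k) := by
    intro k
    have := Real.concaveOn_negMulLog.2 (Set.mem_Ici.mpr (hq1nn k)) (Set.mem_Ici.mpr (hq2nn k))
      ht0' ht1' (by ring)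
    simpa [smul_eq_mul, hcomb k] using this
  have hSρ : vnEntropy ρ = ∑ k, Real.negMulLog (p k) := vnEntropy_eq hPρ.1
  have hS1 : vnEntropy ρ₁ = ∑ j, Real.negMulLog (hP1.1.eigenvalues j) := vnEntropy_eq hP1.1
  have hS2 : vnEntropy ρ₂ = ∑ j, Real.negMulLog (hP2.1.eigenvalues j) := vnEntropy_eq hP2.1
  have hw1 : ∑ j, Real.negMulLog (hP1.1.eigenvalues j) ≤ ∑ k, Real.negMulLog (q1 k) :=
    (schur_entropy hP1 U).1
  have hw2 : ∑ j, Real.negMulLog (hP2.1.eigenvalues j) ≤ ∑ k, Real.negMulLog (q2 k) :=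
    (schur_entropy hP2 U).1
  have hsum_le : ∑ k, (t * Real.negMulLog (q1 k) + (1 - t) * Real.negMulLog (q2 k))
      = t * ∑ k, Real.negMulLog (q1 k) + (1 - t) * ∑ k, Real.negMulLog (q2 k) := by
    rw [Finset.sum_add_distrib, Finset.mul_sum, Finset.mul_sum]
  by_cases hq : q1 = q2
  · -- not both diagonal
    have hnd : (∃ k l, k ≠ l ∧ B₁ k l ≠ 0) ∨ (∃ k l, k ≠ l ∧ B₂ k l ≠ 0) := by
      by_contra h
      push_neg at h
      obtain ⟨hd1, hd2⟩ := h
      apply hne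
      have hB12 : B₁ = B₂ := by
        ext k l
        by_cases hkl : k = l
        · subst hkl
          have e1 : B₁ k k = ((q1 k : ℝ) : ℂ) :=
            (Complex.conj_eq_iff_re.mp (congrFun (congrFun hB1psd.1 k) k)).symm
          have e2 : B₂ k k = ((q2 k : ℝ) : ℂ) :=
            (Complex.conj_eq_iff_re.mp (congrFun (congrFun hB2psd.1 k) k)).symm
          rw [e1, e2, hq]
        · rw [hd1 k l hkl, hd2 k l hkl]
      have hUU : (U : Matrix (Fin d) (Fin d) ℂ) * star (U : Matrix (Fin d) (Fin d) ℂ) = 1 :=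
        Matrix.mem_unitaryGroup_iff.mp U.2
      have key : ∀ X : Matrix (Fin d) (Fin d) ℂ,
          (U : Matrix (Fin d) (Fin d) ℂ) * (star (U : Matrix (Fin d) (Fin d) ℂ) * X * U)
            * star (U : Matrix (Fin d) (Fin d) ℂ) = X := by
        intro X
        calc (U : Matrix (Fin d) (Fin d) ℂ) * (star (U : Matrix (Fin d) (Fin d) ℂ) * X * U)
              * star (U : Matrix (Fin d) (Fin d) ℂ)
            = ((U : Matrix (Fin d) (Fin d) ℂ) * star (U : Matrix (Fin d) (Fin d) ℂ)) * X
              * ((U : Matrix (Fin d) (Fin d) ℂ) * star (U : Matrix (Fin d) (Fin d) ℂ)) := by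
              simp only [Matrix.mul_assoc]
          _ = X := by rw [hUU, Matrix.one_mul, Matrix.mul_one]
      calc ρ₁ = (U : Matrix (Fin d) (Fin d) ℂ) * B₁ * star (U : Matrix (Fin d) (Fin d) ℂ) :=
            (key ρ₁).symm
        _ = (U : Matrix (Fin d) (Fin d) ℂ) * B₂ * star (U : Matrix (Fin d) (Fin d) ℂ) := by
            rw [hB12]
        _ = ρ₂ := key ρ₂
    have main_le : ∑ k, (t * Real.negMulLog (q1 k) + (1 - t) * Real.negMulLog (q2 k))
        ≤ ∑ k, Real.negMulLog (p k) := Finset.sum_le_sum fun k _ => hpt k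
    rw [hSρ, hS1, hS2]
    rcases hnd with h | h
    · have hs1 := (schur_entropy hP1 U).2 h
      calc t * ∑ j, Real.negMulLog (hP1.1.eigenvalues j)
            + (1 - t) * ∑ j, Real.negMulLog (hP2.1.eigenvalues j)
          < t * ∑ k, Real.negMulLog (q1 k) + (1 - t) * ∑ k, Real.negMulLog (q2 k) := by
            have l1 := mul_lt_mul_of_pos_left hs1 ht0
            have l2 := mul_le_mul_of_nonneg_left hw2 ht1'
            linarith
        _ = ∑ k, (t * Real.negMulLog (q1 k) + (1 - t) * Real.negMulLog (q2 k)) := hsum_le.symm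
        _ ≤ ∑ k, Real.negMulLog (p k) := main_le
    · have hs2 := (schur_entropy hP2 U).2 h
      calc t * ∑ j, Real.negMulLog (hP1.1.eigenvalues j)
            + (1 - t) * ∑ j, Real.negMulLog (hP2.1.eigenvalues j)
          < t * ∑ k, Real.negMulLog (q1 k) + (1 - t) * ∑ k, Real.negMulLog (q2 k) := by
            have l1 := mul_le_mul_of_nonneg_left hw1 ht0'
            have l2 := mul_lt_mul_of_pos_left hs2 (by linarith : (0:ℝ) < 1 - t)
            linarith
        _ = ∑ k, (t * Real.negMulLog (q1 k) + (1 - t) * Real.negMulLog (q2 k)) := hsum_le.symm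
        _ ≤ ∑ k, Real.negMulLog (p k) := main_le
  · obtain ⟨k₀, hk₀⟩ : ∃ k, q1 k ≠ q2 k := by
      by_contra h
      push_neg at h
      exact hq (funext h)
    have hstrict_k : t * Real.negMulLog (q1 k₀) + (1 - t) * Real.negMulLog (q2 k₀)
        < Real.negMulLog (p k₀) := by
      have := Real.strictConcaveOn_negMulLog.2 (Set.mem_Ici.mpr (hq1nn k₀))
        (Set.mem_Ici.mpr (hq2nn k₀)) hk₀ ht0 (by linarith : (0:ℝ) < 1 - t) (by ring)
      simpa [smul_eq_mul, hcomb k₀] using this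
    rw [hSρ, hS1, hS2]
    calc t * ∑ j, Real.negMulLog (hP1.1.eigenvalues j)
          + (1 - t) * ∑ j, Real.negMulLog (hP2.1.eigenvalues j)
        ≤ t * ∑ k, Real.negMulLog (q1 k) + (1 - t) * ∑ k, Real.negMulLog (q2 k) := by
          have l1 := mul_le_mul_of_nonneg_left hw1 ht0'
          have l2 := mul_le_mul_of_nonneg_left hw2 ht1'
          linarith
      _ = ∑ k, (t * Real.negMulLog (q1 k) + (1 - t) * Real.negMulLog (q2 k)) := hsum_le.symm
      _ < ∑ k, Real.negMulLog (p k) :=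
          Finset.sum_lt_sum (fun k _ => hpt k) ⟨k₀, Finset.mem_univ k₀, hstrict_k⟩
end
end

section
/- The negativity does not increase under a completely positive trace-nonincreasing local map on average: if ρ^{T_A} = (1+a)ρ⁺ − aρ⁻ with ρ⁺, ρ⁻ density matrices, ρ⁺ρ⁻=0, and Φ(X) = (I⊗M) X (I⊗M†) with p = Tr Φ(ρ) > 0 and σ = Φ(ρ)/p, then N(σ) ≤ (a·Tr Φ(ρ⁻))/p, where N(σ) = (‖σ^{T_A}‖₁ − 1)/2. -/
open Matrix Kronecker ComplexOrder BigOperators Finset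

noncomputable section

def ptranspose {m n : Type*} (X : Matrix (m × n) (m × n) ℂ) : Matrix (m × n) (m × n) ℂ :=
  Matrix.of fun p q => X (q.1, p.2) (p.1, q.2)

def traceNorm {d : Type*} [Fintype d] [DecidableEq d] (A : Matrix d d ℂ) : ℝ :=
  (((Matrix.isHermitian_conjTranspose_mul_self A).eigenvectorUnitary : Matrix d d ℂ) *
    diagonal (((↑) : ℝ → ℂ) ∘ Real.sqrt ∘ (Matrix.isHermitian_conjTranspose_mul_self A).eigenvalues) *
    (star (Matrix.isHermitian_conjTranspose_mul_self A).eigenvectorUnitary : Matrix d d ℂ)).trace.re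

section Aux

lemma diag_nonneg' {d : Type*} [Fintype d] [DecidableEq d] {A : Matrix d d ℂ}
    (hA : A.PosSemidef) (i : d) : 0 ≤ (A i i).re := by
  have h := hA.dotProduct_mulVec_nonneg (Pi.single i 1)
  simp [dotProduct, mulVec, Pi.single_apply] at h
  exact (Complex.le_def.mp h).1

lemma smul_psd {d : Type*} [Fintype d] [DecidableEq d] {A : Matrix d d ℂ} (hA : A.PosSemidef)
    {r : ℝ} (hr : 0 ≤ r) : ((r : ℂ) • A).PosSemidef := by
  refine posSemidef_iff_dotProduct_mulVec.mpr ⟨?_, ?_⟩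
  · unfold Matrix.IsHermitian
    rw [conjTranspose_smul, hA.1.eq]
    simp
  · intro x
    rw [smul_mulVec, dotProduct_smul]
    exact mul_nonneg (by exact_mod_cast hr) (hA.dotProduct_mulVec_nonneg x)

lemma pt_trace {m n : Type*} [Fintype m] [Fintype n] (X : Matrix (m × n) (m × n) ℂ) :
    (ptranspose X).trace = X.trace := by
  simp [Matrix.trace, Matrix.diag, ptranspose]

lemma pt_smul {m n : Type*} (X : Matrix (m × n) (m × n) ℂ) (c : ℂ) :
    ptranspose (c • X) = c • ptranspose X := rfl

lemma pt_comm {m n : ℕ} (M N : Matrix (Fin n) (Fin n) ℂ)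
    (X : Matrix (Fin m × Fin n) (Fin m × Fin n) ℂ) :
    ptranspose (((1 : Matrix (Fin m) (Fin m) ℂ) ⊗ₖ M) * X * ((1 : Matrix (Fin m) (Fin m) ℂ) ⊗ₖ N))
      = ((1 : Matrix (Fin m) (Fin m) ℂ) ⊗ₖ M) * ptranspose X *
        ((1 : Matrix (Fin m) (Fin m) ℂ) ⊗ₖ N) := by
  ext ⟨p1, p2⟩ ⟨q1, q2⟩
  simp only [ptranspose, Matrix.of_apply, Matrix.mul_apply, Fintype.sum_prod_type,
    kroneckerMap_apply, Matrix.one_apply, ite_mul, one_mul, zero_mul, mul_ite, mul_one, mul_zero,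
    Finset.sum_ite_eq, Finset.sum_ite_eq', Finset.mem_univ, if_true]
  simp only [Finset.sum_ite_eq', Finset.mem_univ, if_true, eq_comm (a := q1), eq_comm (a := p1)]
  simp [Finset.sum_ite_eq, Finset.sum_ite_eq']

lemma kron_one_conjTranspose {m n : ℕ} (M : Matrix (Fin n) (Fin n) ℂ) :
    ((1 : Matrix (Fin m) (Fin m) ℂ) ⊗ₖ M)ᴴ = (1 : Matrix (Fin m) (Fin m) ℂ) ⊗ₖ Mᴴ := by
  ext ⟨p1, p2⟩ ⟨q1, q2⟩
  simp only [conjTranspose_apply, kroneckerMap_apply, Matrix.one_apply]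
  by_cases h : p1 = q1 <;> simp [h, eq_comm, Ne.symm]

lemma traceNorm_sub_le {d : Type*} [Fintype d] [DecidableEq d]
    {B C : Matrix d d ℂ} (hB : B.PosSemidef) (hC : C.PosSemidef) :
    traceNorm (B - C) ≤ B.trace.re + C.trace.re := by
  set X := B - C with hXdef
  have hX : X.IsHermitian := hB.1.sub hC.1
  set U : Matrix d d ℂ := (hX.eigenvectorUnitary : Matrix d d ℂ) with hUdef
  have hU1 : star U * U = 1 := mem_unitaryGroup_iff'.mp hX.eigenvectorUnitary.2
  have hU2 : U * star U = 1 := mem_unitaryGroup_iff.mp hX.eigenvectorUnitary.2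
  have hmul : ∀ f g : d → ℂ, (U * diagonal f * star U) * (U * diagonal g * star U)
      = U * diagonal (fun i => f i * g i) * star U := by
    intro f g
    have h1 : (U * diagonal f * star U) * (U * diagonal g * star U)
        = U * diagonal f * (star U * U) * diagonal g * star U := by
      simp only [Matrix.mul_assoc]
    rw [h1, hU1, Matrix.mul_one, Matrix.mul_assoc U, Matrix.diagonal_mul_diagonal]
  have hspec : X = U * diagonal (fun i => ((hX.eigenvalues i : ℝ) : ℂ)) * star U := by
    exact hX.spectral_theorem
  set S : Matrix d d ℂ := U * diagonal (fun i => ((|hX.eigenvalues i| : ℝ) : ℂ)) * star U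
    with hSdef
  have hSpsd : S.PosSemidef := by
    have hd : (Matrix.diagonal (fun i => ((|hX.eigenvalues i| : ℝ) : ℂ))).PosSemidef :=
      Matrix.posSemidef_diagonal_iff.mpr fun i => by positivity
    exact hd.mul_mul_conjTranspose_same U
  have hSsq : S ^ 2 = Xᴴ * X := by
    rw [hX.eq, pow_two, hSdef, hmul]
    conv_rhs => rw [hspec, hmul]
    have hfun : (fun i => ((|hX.eigenvalues i| : ℝ) : ℂ) * ((|hX.eigenvalues i| : ℝ) : ℂ))
        = fun i => ((hX.eigenvalues i : ℝ) : ℂ) * ((hX.eigenvalues i : ℝ) : ℂ) := by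
      funext i
      rw [← Complex.ofReal_mul, ← Complex.ofReal_mul, abs_mul_abs_self]
    rw [hfun]
  have hSeq : S = ((Matrix.isHermitian_conjTranspose_mul_self X).eigenvectorUnitary : Matrix d d ℂ) *
      diagonal (((↑) : ℝ → ℂ) ∘ Real.sqrt ∘ (Matrix.isHermitian_conjTranspose_mul_self X).eigenvalues) *
      (star (Matrix.isHermitian_conjTranspose_mul_self X).eigenvectorUnitary : Matrix d d ℂ) := by
    have hXXpsd : (Xᴴ * X).PosSemidef := Matrix.posSemidef_conjTranspose_mul_self X
    set hXX := Matrix.isHermitian_conjTranspose_mul_self X with hXXdef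
    set V : Matrix d d ℂ := (hXX.eigenvectorUnitary : Matrix d d ℂ) with hVdef
    have hV1 : star V * V = 1 := mem_unitaryGroup_iff'.mp hXX.eigenvectorUnitary.2
    have hev : ∀ i, 0 ≤ hXX.eigenvalues i := fun i => hXXpsd.eigenvalues_nonneg i
    set f : d → ℂ := ((↑) : ℝ → ℂ) ∘ Real.sqrt ∘ hXX.eigenvalues with hfdef
    set T := V * diagonal f * star V with hTdef
    have hTpsd : T.PosSemidef := by
      have hd : (diagonal f).PosSemidef := posSemidef_diagonal_iff.mpr fun i => by
        simp only [hfdef, Function.comp_apply]; positivity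
      exact hd.mul_mul_conjTranspose_same V
    have hTsq : T * T = Xᴴ * X := by
      have h1 : T * T = V * diagonal f * (star V * V) * diagonal f * star V := by
        simp only [hTdef, Matrix.mul_assoc]
      rw [h1, hV1, Matrix.mul_one, Matrix.mul_assoc V (diagonal f), diagonal_mul_diagonal]
      have hf : (fun i => f i * f i) = ((↑) : ℝ → ℂ) ∘ hXX.eigenvalues := by
        funext i
        simp only [hfdef, Function.comp_apply]
        rw [← Complex.ofReal_mul, Real.mul_self_sqrt (hev i)]
      rw [hf]
      exact hXX.spectral_theorem.symm
    open scoped MatrixOrder in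
    rw [← (CFC.sqrt_eq_iff _ _ hXXpsd.nonneg hSpsd.nonneg).mpr (by rw [← pow_two]; exact hSsq),
      (CFC.sqrt_eq_iff _ _ hXXpsd.nonneg hTpsd.nonneg).mpr hTsq]
  have htrS : traceNorm X = ∑ i, |hX.eigenvalues i| := by
    rw [traceNorm, ← hSeq, hSdef, Matrix.trace_mul_cycle, hU1, Matrix.one_mul]
    simp [Matrix.trace_diagonal]
  set B' := star U * B * U with hB'def
  set C' := star U * C * U with hC'def
  have hB' : B'.PosSemidef := by
    exact hB.conjTranspose_mul_mul_same U
  have hC' : C'.PosSemidef := by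
    exact hC.conjTranspose_mul_mul_same U
  have hdiag : star U * X * U = diagonal (fun i => ((hX.eigenvalues i : ℝ) : ℂ)) := by
    conv_lhs => rw [hspec]
    calc star U * (U * diagonal (fun i => ((hX.eigenvalues i : ℝ) : ℂ)) * star U) * U
        = (star U * U) * diagonal (fun i => ((hX.eigenvalues i : ℝ) : ℂ)) * (star U * U) := by
          simp only [Matrix.mul_assoc]
      _ = _ := by rw [hU1]; simp
  have heig : ∀ i, hX.eigenvalues i = (B' i i).re - (C' i i).re := by
    intro i
    have h1 : (star U * X * U) i i = ((hX.eigenvalues i : ℝ) : ℂ) := by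
      rw [hdiag]; simp
    have h2 : star U * X * U = B' - C' := by
      rw [hB'def, hC'def, hXdef, Matrix.mul_sub, Matrix.sub_mul]
    rw [h2] at h1
    have := congrArg Complex.re h1
    simp at this
    linarith [this]
  have hbound : ∀ i, |hX.eigenvalues i| ≤ (B' i i).re + (C' i i).re := by
    intro i
    rw [heig i]
    have h1 := diag_nonneg' hB' i
    have h2 := diag_nonneg' hC' i
    rw [abs_le]; constructor <;> nlinarith
  have htrB : ∑ i, (B' i i).re = B.trace.re := by
    have : B'.trace = B.trace := by
      rw [hB'def, Matrix.trace_mul_cycle, hU2, Matrix.one_mul]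
    rw [← this, Matrix.trace]
    simp [Matrix.diag, Complex.re_sum]
  have htrC : ∑ i, (C' i i).re = C.trace.re := by
    have : C'.trace = C.trace := by
      rw [hC'def, Matrix.trace_mul_cycle, hU2, Matrix.one_mul]
    rw [← this, Matrix.trace]
    simp [Matrix.diag, Complex.re_sum]
  calc traceNorm X = ∑ i, |hX.eigenvalues i| := htrS
    _ ≤ ∑ i, ((B' i i).re + (C' i i).re) := Finset.sum_le_sum fun i _ => hbound i
    _ = B.trace.re + C.trace.re := by rw [Finset.sum_add_distrib, htrB, htrC]

end Aux

/-- The negativity does not increase on average under a completely positive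
trace-nonincreasing local map `Φ(X) = (I⊗M) X (I⊗M†)`:
`N(σ) ≤ a · Tr Φ(ρ⁻) / p` for `σ = Φ(ρ)/p`, `p = Tr Φ(ρ)`. -/
theorem negativity_le_under_local_map {m n : ℕ}
    (ρ ρp ρm : Matrix (Fin m × Fin n) (Fin m × Fin n) ℂ) (a : ℝ)
    (M : Matrix (Fin n) (Fin n) ℂ)
    (hρ : IsDensity ρ) (hρp : IsDensity ρp) (hρm : IsDensity ρm) (ha : 0 ≤ a)
    (hdec : ptranspose ρ = ((1 + a : ℝ) : ℂ) • ρp - ((a : ℝ) : ℂ) • ρm)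
    (horth : ρp * ρm = 0)
    (hM : ((1 : Matrix (Fin n) (Fin n) ℂ) - Mᴴ * M).PosSemidef)
    (Φ : Matrix (Fin m × Fin n) (Fin m × Fin n) ℂ → Matrix (Fin m × Fin n) (Fin m × Fin n) ℂ)
    (hΦ : ∀ X, Φ X = ((1 : Matrix (Fin m) (Fin m) ℂ) ⊗ₖ M) * X *
        ((1 : Matrix (Fin m) (Fin m) ℂ) ⊗ₖ Mᴴ))
    (p : ℝ) (hp : p = (Φ ρ).trace.re) (hppos : 0 < p)
    (σ : Matrix (Fin m × Fin n) (Fin m × Fin n) ℂ) (hσ : σ = ((p : ℂ))⁻¹ • Φ ρ) :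
    (traceNorm (ptranspose σ) - 1) / 2 ≤ a * (Φ ρm).trace.re / p := by
  -- Φ preserves positive semidefiniteness
  have hΦpsd : ∀ X : Matrix (Fin m × Fin n) (Fin m × Fin n) ℂ, X.PosSemidef → (Φ X).PosSemidef := by
    intro X hX
    rw [hΦ, ← kron_one_conjTranspose]
    exact hX.mul_mul_conjTranspose_same _
  -- Φ is linear on the relevant combination
  have hΦlin : Φ (ptranspose ρ) = ((1 + a : ℝ) : ℂ) • Φ ρp - ((a : ℝ) : ℂ) • Φ ρm := by
    rw [hΦ, hΦ, hΦ, hdec]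
    simp only [Matrix.mul_sub, Matrix.sub_mul, Matrix.mul_smul, Matrix.smul_mul]
  -- partial transpose commutes with Φ
  have hcomm : ptranspose (Φ ρ) = Φ (ptranspose ρ) := by
    rw [hΦ, hΦ, pt_comm]
  -- trace identity
  have tp := (Φ ρp).trace.re
  have htrid : (1 + a) * (Φ ρp).trace.re - a * (Φ ρm).trace.re = p := by
    have h1 : (ptranspose (Φ ρ)).trace = (Φ ρ).trace := pt_trace _
    rw [hcomm, hΦlin] at h1
    have := congrArg Complex.re h1
    simp [Matrix.trace_sub, Matrix.trace_smul, Complex.mul_re] at this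
    rw [hp]
    linarith [this]
  -- decomposition of ptranspose σ
  set B := (((p⁻¹ * (1 + a) : ℝ)) : ℂ) • Φ ρp with hBdef
  set C := (((p⁻¹ * a : ℝ)) : ℂ) • Φ ρm with hCdef
  have hptσ : ptranspose σ = B - C := by
    rw [hσ, pt_smul, hcomm, hΦlin, smul_sub, smul_smul, smul_smul, hBdef, hCdef]
    push_cast
    ring_nf
  have hBpsd : B.PosSemidef := smul_psd (hΦpsd _ hρp.1) (by positivity)
  have hCpsd : C.PosSemidef := smul_psd (hΦpsd _ hρm.1) (by positivity)
  have hkey : traceNorm (ptranspose σ) ≤ B.trace.re + C.trace.re := by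
    rw [hptσ]; exact traceNorm_sub_le hBpsd hCpsd
  have hBtr : B.trace.re = p⁻¹ * (1 + a) * (Φ ρp).trace.re := by
    rw [hBdef, Matrix.trace_smul]
    simp [Complex.mul_re]
  have hCtr : C.trace.re = p⁻¹ * a * (Φ ρm).trace.re := by
    rw [hCdef, Matrix.trace_smul]
    simp [Complex.mul_re]
  rw [hBtr, hCtr] at hkey
  have e : (1 + a) * (Φ ρp).trace.re = p + a * (Φ ρm).trace.re := by linarith [htrid]
  have h2 : p⁻¹ * (1 + a) * (Φ ρp).trace.re + p⁻¹ * a * (Φ ρm).trace.re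
      = 1 + 2 * (a * (Φ ρm).trace.re) * p⁻¹ := by
    rw [mul_assoc p⁻¹, e]
    field_simp
    ring
  have hdiv : a * (Φ ρm).trace.re / p = a * (Φ ρm).trace.re * p⁻¹ := div_eq_mul_inv _ _
  linarith [hkey, h2, hdiv]
end
end

section
/- Convex roof monotonicity transfer: let E be a nonnegative function on states and E_F its convex roof. Suppose for every pure state |η⟩ and a fixed family of maps {Φ_k}, E(|η⟩⟨η|) ≥ ∑_k t_k E_F(Φ_k(|η⟩⟨η|)/t_k) with t_k = Tr Φ_k(|η⟩⟨η|). Then for every mixed state ρ, E_F(ρ) ≥ ∑_k p_k E_F(Φ_k(ρ)/p_k), p_k = Tr Φ_k(ρ). -/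
open Matrix Kronecker ComplexOrder BigOperators Finset

noncomputable section

/-- A pure state is a rank-one projection `|ψ⟩⟨ψ|` onto a unit vector. -/
def IsPure {d : Type*} [Fintype d] (ρ : Matrix d d ℂ) : Prop :=
  ∃ ψ : d → ℂ, star ψ ⬝ᵥ ψ = 1 ∧ ρ = Matrix.vecMulVec ψ (star ψ)

open Matrix ComplexOrder

lemma trace_real_of_psd {n : Type*} [Fintype n] {M : Matrix n n ℂ} (h : M.PosSemidef) :
    M.trace = (M.trace.re : ℂ) := by
  have h1 : Mᴴ.trace = star M.trace := Matrix.trace_conjTranspose M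
  rw [h.1.eq] at h1
  have him : M.trace.im = 0 := by
    have := congrArg Complex.im h1
    simp [Complex.star_def] at this
    linarith
  exact Complex.ext (by simp) (by simp [him])

lemma psd_smul_real {n : Type*} [Fintype n] {M : Matrix n n ℂ} (h : M.PosSemidef)
    {r : ℝ} (hr : 0 ≤ r) : ((r : ℂ) • M).PosSemidef := by
  refine Matrix.posSemidef_iff_dotProduct_mulVec.mpr ⟨?_, ?_⟩
  · simp [Matrix.IsHermitian, Matrix.conjTranspose_smul, h.1.eq, Complex.star_def,
      Complex.conj_ofReal]
  · intro x
    rw [Matrix.smul_mulVec, dotProduct_smul, smul_eq_mul]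
    exact mul_nonneg (Complex.zero_le_real.2 hr) (h.dotProduct_mulVec_nonneg x)

lemma pure_isDensity {n : Type*} [Fintype n] {ρ : Matrix n n ℂ}
    (h : ∃ ψ : n → ℂ, star ψ ⬝ᵥ ψ = 1 ∧ ρ = Matrix.vecMulVec ψ (star ψ)) :
    ρ.PosSemidef ∧ ρ.trace = 1 := by
  obtain ⟨ψ, hψ, rfl⟩ := h
  constructor
  · refine Matrix.posSemidef_iff_dotProduct_mulVec.mpr ⟨?_, ?_⟩
    · ext i j; simp [Matrix.conjTranspose_apply, Matrix.vecMulVec_apply, mul_comm]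
    · intro x
      have : star x ⬝ᵥ (Matrix.vecMulVec ψ (star ψ) *ᵥ x) =
          star (star ψ ⬝ᵥ x) * (star ψ ⬝ᵥ x) := by
        simp [Matrix.mulVec, Matrix.vecMulVec_apply, dotProduct, Finset.mul_sum,
          Finset.sum_mul, mul_comm, mul_assoc, mul_left_comm]
        rw [Finset.sum_comm]
      rw [this]
      exact star_mul_self_nonneg _
  · rw [Matrix.trace]
    simp only [Matrix.diag_apply, Matrix.vecMulVec_apply]
    rw [← hψ, dotProduct]
    exact Finset.sum_congr rfl fun i _ => mul_comm _ _

/-- Convex roof monotonicity transfer: if the average monotonicity inequality holds for every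
pure state, then it holds for the convex roof `E_F` on every mixed state. -/
theorem convexRoof_monotonicity_transfer {d K : ℕ}
    (E EF : Matrix (Fin d) (Fin d) ℂ → ℝ)
    (hE0 : ∀ ρ, 0 ≤ E ρ) (hEF0 : ∀ ρ, 0 ≤ EF ρ)
    -- the convex roof minimum is attained by some optimal pure-state decomposition
    (hopt : ∀ ρ, IsDensity ρ → ∃ (J : ℕ) (t : Fin J → ℝ)
        (η : Fin J → Matrix (Fin d) (Fin d) ℂ),
      (∀ j, 0 ≤ t j) ∧ (∑ j, t j = 1) ∧ (∀ j, IsPure (η j)) ∧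
      ρ = (∑ j, ((t j : ℝ) : ℂ) • η j) ∧ EF ρ = ∑ j, t j * E (η j))
    -- the convex roof is a lower bound over all pure-state decompositions
    (hlb : ∀ ρ, IsDensity ρ → ∀ (J : ℕ) (t : Fin J → ℝ)
        (η : Fin J → Matrix (Fin d) (Fin d) ℂ),
      (∀ j, 0 ≤ t j) → (∑ j, t j = 1) → (∀ j, IsPure (η j)) →
      ρ = (∑ j, ((t j : ℝ) : ℂ) • η j) → EF ρ ≤ ∑ j, t j * E (η j))
    -- convexity of the convex roof
    (hconv : ∀ (J : ℕ) (w : Fin J → ℝ) (τ : Fin J → Matrix (Fin d) (Fin d) ℂ),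
      (∀ j, 0 ≤ w j) → (∑ j, w j = 1) → (∀ j, IsDensity (τ j)) →
      EF (∑ j, ((w j : ℝ) : ℂ) • τ j) ≤ ∑ j, w j * EF (τ j))
    (Φ : Fin K → (Matrix (Fin d) (Fin d) ℂ →ₗ[ℂ] Matrix (Fin d) (Fin d) ℂ))
    (hΦpos : ∀ k (X : Matrix (Fin d) (Fin d) ℂ), X.PosSemidef → (Φ k X).PosSemidef)
    (hΦtr : ∀ X : Matrix (Fin d) (Fin d) ℂ, (∑ k, (Φ k X).trace) = X.trace)
    (hΦppos : ∀ k, ∀ ρ, IsDensity ρ → 0 < ((Φ k) ρ).trace.re)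
    -- the average monotonicity inequality on pure states
    (hpure : ∀ η, IsPure η →
      (∑ k, ((Φ k) η).trace.re * EF ((((Φ k) η).trace)⁻¹ • (Φ k) η)) ≤ E η)
    (ρ : Matrix (Fin d) (Fin d) ℂ) (hρ : IsDensity ρ) :
    (∑ k, ((Φ k) ρ).trace.re * EF ((((Φ k) ρ).trace)⁻¹ • (Φ k) ρ)) ≤ EF ρ := by
  obtain ⟨J, t, η, ht0, htsum, hpureη, hdecomp, hEFeq⟩ := hopt ρ hρ
  have hηd : ∀ j, IsDensity (η j) := fun j => pure_isDensity (hpureη j)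
  -- real traces
  set q : Fin K → Fin J → ℝ := fun k j => ((Φ k) (η j)).trace.re with hq_def
  set p : Fin K → ℝ := fun k => ((Φ k) ρ).trace.re with hp_def
  have hq_pos : ∀ k j, 0 < q k j := fun k j => hΦppos k (η j) (hηd j)
  have hp_pos : ∀ k, 0 < p k := fun k => hΦppos k ρ hρ
  have hqtr : ∀ k j, ((Φ k) (η j)).trace = ((q k j : ℝ) : ℂ) := fun k j =>
    trace_real_of_psd (hΦpos k _ (hηd j).1)
  have hptr : ∀ k, ((Φ k) ρ).trace = ((p k : ℝ) : ℂ) := fun k =>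
    trace_real_of_psd (hΦpos k ρ hρ.1)
  have hΦρ : ∀ k, (Φ k) ρ = ∑ j, ((t j : ℝ) : ℂ) • (Φ k) (η j) := by
    intro k
    rw [hdecomp, map_sum]
    simp
  have hpsum : ∀ k, p k = ∑ j, t j * q k j := by
    intro k
    have h1 : ((p k : ℝ) : ℂ) = ∑ j, ((t j : ℝ) : ℂ) * ((q k j : ℝ) : ℂ) := by
      rw [← hptr k, hΦρ k, Matrix.trace_sum]
      exact Finset.sum_congr rfl fun j _ => by rw [Matrix.trace_smul, hqtr k j, smul_eq_mul]
    exact_mod_cast h1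
  -- the conditional states
  set σ : Fin K → Fin J → Matrix (Fin d) (Fin d) ℂ :=
    fun k j => (((Φ k) (η j)).trace)⁻¹ • (Φ k) (η j) with hσ_def
  have hσ_eq : ∀ k j, σ k j = (((q k j)⁻¹ : ℝ) : ℂ) • (Φ k) (η j) := by
    intro k j; rw [hσ_def]; simp only [hqtr k j, Complex.ofReal_inv]
  have hσd : ∀ k j, IsDensity (σ k j) := by
    intro k j
    constructor
    · rw [hσ_eq]
      exact psd_smul_real (hΦpos k _ (hηd j).1) (inv_nonneg.2 (hq_pos k j).le)
    · rw [hσ_eq, Matrix.trace_smul, hqtr k j, smul_eq_mul, ← Complex.ofReal_mul,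
        inv_mul_cancel₀ (hq_pos k j).ne']
      simp
  -- the weights
  set w : Fin K → Fin J → ℝ := fun k j => t j * q k j / p k with hw_def
  have hw0 : ∀ k j, 0 ≤ w k j := fun k j =>
    div_nonneg (mul_nonneg (ht0 j) (hq_pos k j).le) (hp_pos k).le
  have hwsum : ∀ k, ∑ j, w k j = 1 := by
    intro k
    rw [hw_def]
    simp only
    rw [← Finset.sum_div, ← hpsum k, div_self (hp_pos k).ne']
  -- representation of the conditional output state as a convex combination
  have hrepr : ∀ k, (((Φ k) ρ).trace)⁻¹ • (Φ k) ρ = ∑ j, ((w k j : ℝ) : ℂ) • σ k j := by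
    intro k
    rw [hptr k, hΦρ k, Finset.smul_sum]
    refine Finset.sum_congr rfl fun j _ => ?_
    rw [hσ_eq, smul_smul, smul_smul, ← Complex.ofReal_inv, ← Complex.ofReal_mul,
      ← Complex.ofReal_mul]
    congr 1
    rw [hw_def]
    field_simp [(hp_pos k).ne', (hq_pos k j).ne']
  -- convexity step
  have hstep : ∀ k, EF ((((Φ k) ρ).trace)⁻¹ • (Φ k) ρ) ≤ ∑ j, w k j * EF (σ k j) := by
    intro k
    rw [hrepr k]
    exact hconv J (w k) (σ k) (hw0 k) (hwsum k) (hσd k)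
  calc ∑ k, ((Φ k) ρ).trace.re * EF ((((Φ k) ρ).trace)⁻¹ • (Φ k) ρ)
      ≤ ∑ k, p k * ∑ j, w k j * EF (σ k j) := by
        refine Finset.sum_le_sum fun k _ => ?_
        exact mul_le_mul_of_nonneg_left (hstep k) (hp_pos k).le
    _ = ∑ k, ∑ j, t j * (q k j * EF (σ k j)) := by
        refine Finset.sum_congr rfl fun k _ => ?_
        rw [Finset.mul_sum]
        refine Finset.sum_congr rfl fun j _ => ?_
        rw [hw_def]
        field_simp [(hp_pos k).ne']
    _ = ∑ j, t j * ∑ k, q k j * EF (σ k j) := by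
        rw [Finset.sum_comm]
        exact Finset.sum_congr rfl fun j _ => by rw [Finset.mul_sum]
    _ ≤ ∑ j, t j * E (η j) := by
        refine Finset.sum_le_sum fun j _ => ?_
        exact mul_le_mul_of_nonneg_left (hpure (η j) (hpureη j)) (ht0 j)
    _ = EF ρ := hEFeq.symm
end
end
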